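/- Let L be an N×N Hermitian positive definite complex matrix, let a > 0 be real, let L^{1/2} be the positive definite square root of L, and set Z(L) = (1/n)∑_{i=1}^n Uᵢ(Uᵢ*LUᵢ)⁻¹Uᵢ*. If (1−a) + a·λ_min( (I+L)⁻¹ + L^{1/2} Z(L) L^{1/2} ) > 0, where λ_min denotes the smallest eigenvalue of the indicated Hermitian matrix, then L + a L Δ(L) L is Hermitian positive definite. -/

import Mathlib

open Matrix
open scoped ComplexOrder

/-- The square root of a positive semidefinite matrix, as defined in the older Mathlib
(removed from current Mathlib). -/
noncomputable def Matrix.PosSemidef.sqrt {𝕜 : Type*} [RCLike 𝕜] {m : Type*} [Fintype m]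
    [DecidableEq m] {A : Matrix m m 𝕜} (hA : A.PosSemidef) : Matrix m m 𝕜 :=
  hA.1.eigenvectorUnitary.1 * diagonal ((↑) ∘ (√·) ∘ hA.1.eigenvalues) *
    (star hA.1.eigenvectorUnitary : Matrix m m 𝕜)

/-- Δ(L) = (1/n)∑ᵢ Uᵢ(Uᵢ*LUᵢ)⁻¹Uᵢ* − (I+L)⁻¹. -/
noncomputable def Delta {N n : ℕ} {k : Fin n → ℕ}
    (U : (i : Fin n) → Matrix (Fin N) (Fin (k i)) ℂ)
    (L : Matrix (Fin N) (Fin N) ℂ) : Matrix (Fin N) (Fin N) ℂ :=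
  (n : ℂ)⁻¹ • (∑ i, U i * ((U i)ᴴ * L * U i)⁻¹ * (U i)ᴴ) - (1 + L)⁻¹

/-- Z(L) = (1/n)∑ᵢ Uᵢ(Uᵢ*LUᵢ)⁻¹Uᵢ*. -/
noncomputable def Zmat {N n : ℕ} {k : Fin n → ℕ}
    (U : (i : Fin n) → Matrix (Fin N) (Fin (k i)) ℂ)
    (L : Matrix (Fin N) (Fin N) ℂ) : Matrix (Fin N) (Fin N) ℂ :=
  (n : ℂ)⁻¹ • (∑ i, U i * ((U i)ᴴ * L * U i)⁻¹ * (U i)ᴴ)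

/-- Conjugating a positive definite matrix by an invertible matrix preserves
positive definiteness. -/
lemma posDef_conj_of_isUnit {m : Type*} [Fintype m] [DecidableEq m]
    {A B : Matrix m m ℂ} (hA : A.PosDef) (hB : IsUnit B) :
    (Bᴴ * A * B).PosDef := by
  refine Matrix.PosDef.of_dotProduct_mulVec_pos (Matrix.isHermitian_conjTranspose_mul_mul B hA.1) fun x hx => ?_
  have hBx : B *ᵥ x ≠ 0 := by
    intro h
    apply hx
    have hinj := Matrix.mulVec_injective_iff_isUnit.mpr hB
    have : B *ᵥ x = B *ᵥ 0 := by simpa using h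
    exact hinj this
  simpa only [star_mulVec, dotProduct_mulVec, vecMul_vecMul] using hA.dotProduct_mulVec_pos hBx

/-- A Hermitian matrix is PSD shifted: `(1-a)•1 + a•M` is positive definite
when `(1-a) + a·λ_min(M) > 0`, `a > 0`. -/
lemma smul_one_add_smul_posDef {m : ℕ} {M : Matrix (Fin m) (Fin m) ℂ}
    (hM : M.IsHermitian) (a : ℝ) (ha : 0 < a)
    (hcond : 0 < (1 - a) + a * ⨅ j, hM.eigenvalues j) :
    (((1 : ℂ) - (a : ℂ)) • (1 : Matrix (Fin m) (Fin m) ℂ) + (a : ℂ) • M).PosDef := by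
  set V : Matrix (Fin m) (Fin m) ℂ := (hM.eigenvectorUnitary : Matrix (Fin m) (Fin m) ℂ)
    with hVdef
  have hVmem : V ∈ Matrix.unitaryGroup (Fin m) ℂ := hM.eigenvectorUnitary.2
  have hVV : V * star V = 1 := Matrix.mem_unitaryGroup_iff.mp hVmem
  have hVunit : IsUnit V := by
    rw [Matrix.isUnit_iff_isUnit_det]
    refine isUnit_of_mul_isUnit_left (y := (star V).det) ?_
    rw [← Matrix.det_mul, hVV, Matrix.det_one]
    exact isUnit_one
  have hVstarUnit : IsUnit (star V) := hVunit.star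
  set D : Matrix (Fin m) (Fin m) ℂ := diagonal (RCLike.ofReal ∘ hM.eigenvalues) with hDdef
  have hspec : M = V * D * star V := by
    have h := hM.spectral_theorem; rwa [Unitary.conjStarAlgAut_apply] at h
  have hKspec : ((1 : ℂ) - (a : ℂ)) • (1 : Matrix (Fin m) (Fin m) ℂ) + (a : ℂ) • M
      = (star V)ᴴ *
      (((1 : ℂ) - (a : ℂ)) • (1 : Matrix (Fin m) (Fin m) ℂ) + (a : ℂ) • D) * (star V) := by
    have hVH : (star V)ᴴ = V := by
      simp [Matrix.star_eq_conjTranspose, Matrix.conjTranspose_conjTranspose]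
    rw [hVH, hspec]
    simp only [mul_add, add_mul, Matrix.mul_smul, Matrix.smul_mul, mul_one, one_mul, hVV]
  rw [hKspec]
  refine posDef_conj_of_isUnit ?_ hVstarUnit
  have hdiag : ((1 : ℂ) - (a : ℂ)) • (1 : Matrix (Fin m) (Fin m) ℂ) + (a : ℂ) • D
      = diagonal (fun j => (((1 - a) + a * hM.eigenvalues j : ℝ) : ℂ)) := by
    ext i j
    by_cases h : i = j
    · subst h
      simp only [Matrix.add_apply, Matrix.smul_apply, Matrix.one_apply_eq, hDdef,
        Matrix.diagonal_apply_eq, Function.comp_apply, smul_eq_mul]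
      push_cast
      try ring
      try rfl
      try norm_cast
    · simp [hDdef, Matrix.diagonal_apply_ne _ h, Matrix.one_apply_ne h]
  rw [hdiag, Matrix.posDef_diagonal_iff]
  intro j
  rw [Complex.zero_lt_real]
  have hle : (⨅ j, hM.eigenvalues j) ≤ hM.eigenvalues j :=
    ciInf_le (Finite.bddBelow_range _) j
  nlinarith

lemma psd_sqrt_mul_self {m : Type*} [Fintype m] [DecidableEq m] {A : Matrix m m ℂ}
    (hA : A.PosSemidef) : hA.sqrt * hA.sqrt = A := by
  unfold Matrix.PosSemidef.sqrt
  conv_rhs => rw [hA.1.spectral_theorem, Unitary.conjStarAlgAut_apply]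
  have hVV : (star hA.1.eigenvectorUnitary : Matrix m m ℂ) * hA.1.eigenvectorUnitary.1 = 1 :=
    Unitary.coe_star_mul_self _
  simp only [mul_assoc]
  rw [← mul_assoc (star _ : Matrix m m ℂ), hVV, one_mul, ← mul_assoc (diagonal _),
    diagonal_mul_diagonal]
  congr 3
  funext i
  simp only [Function.comp_apply]
  rw [← RCLike.ofReal_mul, Real.mul_self_sqrt (hA.eigenvalues_nonneg i)]

lemma psd_sqrt_herm {m : Type*} [Fintype m] [DecidableEq m] {A : Matrix m m ℂ}
    (hA : A.PosSemidef) : (hA.sqrt)ᴴ = hA.sqrt := by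
  unfold Matrix.PosSemidef.sqrt
  simp [Matrix.star_eq_conjTranspose, conjTranspose_mul, diagonal_conjTranspose, mul_assoc]
  rw [show star (Complex.ofReal ∘ (fun x => √x) ∘ hA.1.eigenvalues) =
      Complex.ofReal ∘ (fun x => √x) ∘ hA.1.eigenvalues from funext fun i => by simp]

/-- Main algebraic core: the update is a congruence of `(1-a)•1 + a•M`. -/
lemma step_core {N : ℕ} (L S Z : Matrix (Fin N) (Fin N) ℂ) (a : ℝ) (ha : 0 < a)
    (hL : L.PosDef) (hSS : S * S = L) (hSherm : Sᴴ = S) (hSunit : IsUnit S)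
    (hHerm : ((1 + L)⁻¹ + S * Z * S).IsHermitian)
    (hcond : 0 < (1 - a) + a * ⨅ j, hHerm.eigenvalues j) :
    (L + (a : ℂ) • (L * (Z - (1 + L)⁻¹) * L)).PosDef := by
  have h1L : (1 + L).PosDef := Matrix.PosDef.add Matrix.PosDef.one hL
  have h1Ldet : IsUnit (1 + L).det := (Matrix.isUnit_iff_isUnit_det _).mp h1L.isUnit
  have hBL : (1 + L) * (1 + L)⁻¹ = 1 := Matrix.mul_nonsing_inv _ h1Ldet
  have hLB : (1 + L)⁻¹ * (1 + L) = 1 := Matrix.nonsing_inv_mul _ h1Ldet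
  have hScomm : S * (1 + L) = (1 + L) * S := by
    have h : S * L = L * S := by rw [← hSS, mul_assoc, ← mul_assoc]
    simp [mul_add, add_mul, h]
  have hSB : S * (1 + L)⁻¹ = (1 + L)⁻¹ * S := by
    have h1 : (1 + L)⁻¹ * ((S * (1 + L)) * (1 + L)⁻¹)
        = (1 + L)⁻¹ * (((1 + L) * S) * (1 + L)⁻¹) := by rw [hScomm]
    rw [mul_assoc S, hBL, mul_one] at h1
    rw [← mul_assoc (1 + L)⁻¹, ← mul_assoc (1 + L)⁻¹, hLB, one_mul] at h1
    exact h1.symm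
  have hkey0 : (1 : Matrix (Fin N) (Fin N) ℂ) - L * (1 + L)⁻¹ = (1 + L)⁻¹ := by
    calc (1 : Matrix (Fin N) (Fin N) ℂ) - L * (1 + L)⁻¹
        = (1 + L) * (1 + L)⁻¹ - L * (1 + L)⁻¹ := by rw [hBL]
      _ = (1 + L)⁻¹ := by noncomm_ring
  have hkey : S * (1 + L)⁻¹ * S = L - L * (1 + L)⁻¹ * L := by
    calc S * (1 + L)⁻¹ * S = (1 + L)⁻¹ * (S * S) := by rw [hSB, mul_assoc]
      _ = (1 + L)⁻¹ * L := by rw [hSS]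
      _ = ((1 : Matrix (Fin N) (Fin N) ℂ) - L * (1 + L)⁻¹) * L := by rw [hkey0]
      _ = L - L * (1 + L)⁻¹ * L := by noncomm_ring
  have hSZS : S * (S * Z * S) * S = L * Z * L := by
    calc S * (S * Z * S) * S = (S * S) * Z * (S * S) := by noncomm_ring
      _ = L * Z * L := by rw [hSS]
  have hmain : L + (a : ℂ) • (L * (Z - (1 + L)⁻¹) * L)
      = Sᴴ * (((1 : ℂ) - (a : ℂ)) • (1 : Matrix (Fin N) (Fin N) ℂ)
          + (a : ℂ) • ((1 + L)⁻¹ + S * Z * S)) * S := by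
    rw [hSherm]
    calc L + (a : ℂ) • (L * (Z - (1 + L)⁻¹) * L)
        = L + (a : ℂ) • (L * Z * L) - (a : ℂ) • (L * (1 + L)⁻¹ * L) := by
          simp only [mul_sub, sub_mul, smul_sub]; abel
      _ = ((1 : ℂ) - (a : ℂ)) • L + ((a : ℂ) • (S * (1 + L)⁻¹ * S)
            + (a : ℂ) • (L * Z * L)) := by
          rw [hkey]; simp only [smul_sub, sub_smul, one_smul]; abel
      _ = ((1 : ℂ) - (a : ℂ)) • L + (a : ℂ) • (S * (1 + L)⁻¹ * S + S * (S * Z * S) * S) := by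
          rw [hSZS, smul_add]
      _ = S * (((1 : ℂ) - (a : ℂ)) • (1 : Matrix (Fin N) (Fin N) ℂ)
            + (a : ℂ) • ((1 + L)⁻¹ + S * Z * S)) * S := by
          simp only [mul_add, add_mul, Matrix.mul_smul, Matrix.smul_mul, mul_one, one_mul, hSS]
  rw [hmain]
  exact posDef_conj_of_isUnit (smul_one_add_smul_posDef hHerm a ha hcond) hSunit

/-- If (1−a) + a·λ_min((I+L)⁻¹ + L^{1/2} Z(L) L^{1/2}) > 0 then the update
L + a L Δ(L) L is Hermitian positive definite. -/
theorem step_posDef_of_eig_bound {N n : ℕ} (hN : 0 < N) (hn : 0 < n)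
    {k : Fin n → ℕ} (hk1 : ∀ i, 1 ≤ k i) (hkN : ∀ i, k i ≤ N)
    (U : (i : Fin n) → Matrix (Fin N) (Fin (k i)) ℂ)
    (hU : ∀ i, (U i)ᴴ * U i = 1)
    (L : Matrix (Fin N) (Fin N) ℂ) (hL : L.PosDef)
    (a : ℝ) (ha : 0 < a)
    (hHerm : ((1 + L)⁻¹ +
        hL.posSemidef.sqrt * Zmat U L * hL.posSemidef.sqrt).IsHermitian)
    (hcond : 0 < (1 - a) + a * ⨅ j, hHerm.eigenvalues j) :
    (L + (a : ℂ) • (L * Delta U L * L)).PosDef := by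
  have hSS : hL.posSemidef.sqrt * hL.posSemidef.sqrt = L := psd_sqrt_mul_self hL.posSemidef
  have hSherm : (hL.posSemidef.sqrt)ᴴ = hL.posSemidef.sqrt := psd_sqrt_herm hL.posSemidef
  have hSunit : IsUnit hL.posSemidef.sqrt := by
    rw [Matrix.isUnit_iff_isUnit_det]
    refine isUnit_of_mul_isUnit_left (y := hL.posSemidef.sqrt.det) ?_
    rw [← Matrix.det_mul, hSS]
    exact (Matrix.isUnit_iff_isUnit_det _).mp hL.isUnit
  have hDelta : Delta U L = Zmat U L - (1 + L)⁻¹ := rfl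
  rw [hDelta]
  exact step_core L hL.posSemidef.sqrt (Zmat U L) a ha hL hSS hSherm hSunit hHerm hcond
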